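/- Fix ε ∈ (0,1), γ ∈ (1/2, 1) and β > 0. Set a_ℓ = β, a_r = γ + β, c_r = 1 and c_ℓ = β/(γ+β), and define g_e : [log ε, 0] × {ℓ, r} → ℝ by g_e(s,α) = c_α ε^γ e^{−γ s} if log ε ≤ s ≤ (log ε)/2, and g_e(s,α) = √(β/(γ+β)) ε^{1/2} e^{−(1−γ)s} if (log ε)/2 < s ≤ 0. Then for every (s,α) ∈ [log ε, 0] × {ℓ, r}, ∫_{log ε − s}^0 g_e(s+t, r) β e^{(1−γ)t} dt + ∫_0^{−s} g_e(s+t, ℓ) a_α e^{γ t} dt ≥ (√(β(γ+β))/(2γ−1)) · ε^{1/2−γ} (1 − ε^{γ−1/2}) · g_e(s,α). -/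

import Mathlib

open MeasureTheory

private lemma expInt (k : ℝ) (a b : ℝ) (hk : k ≠ 0) :
    ∫ t in a..b, Real.exp (k * t) = (Real.exp (k * b) - Real.exp (k * a)) / k := by
  rw [intervalIntegral.integral_comp_mul_left (fun x => Real.exp x) hk]
  simp [integral_exp, smul_eq_mul]
  ring

private lemma expMul (x y z : ℝ) (h : x + y = z) :
    Real.exp x * Real.exp y = Real.exp z := by
  rw [← Real.exp_add, h]

private lemma expMul3 (x y z w : ℝ) (h : x + y + z = w) :
    Real.exp x * Real.exp y * Real.exp z = Real.exp w := by
  rw [← Real.exp_add, ← Real.exp_add, h]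


private lemma aux1 (D S cif aα β q X Y Z W U V P Q E1 E2 : ℝ) (hD : D ≠ 0) (hS : S ≠ 0)
    (hS2 : S^2 = β*q) (hkey : aα*β = cif*(β*q))
    (m1 : X*Z*W = E1) (m2 : Y*E1 = E2) (m3 : U*V*P = E1) (m4 : U*V*Q = E2) :
    S / D * X * (1 - Y) * (cif * Z * W) = (aα * (β/S) * U * V) * ((P - Q)/D) := by
  field_simp
  linear_combination (cif * (1 - Y) * X * Z * W) * hS2
    + (cif * β * q * (1 - Y)) * m1
    - (cif * β * q) * m2
    - (aα * β) * m3
    + (aα * β) * m4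
    - ((E1 - E2)) * hkey

private lemma aux2 (D D' S β X Y Z W U V P Q E1 E2 : ℝ) (hD : D ≠ 0) (hS : S ≠ 0)
    (hDD : D' = -D)
    (m1 : X*U*V = E1) (m2 : Y*E1 = E2) (m3 : Z*W*P = E2) (m4 : Z*W*Q = E1) :
    S / D * X * (1 - Y) * (β / S * U * V) = (β * Z * W) * ((P - Q)/D') := by
  subst hDD
  rw [div_neg]
  field_simp
  linear_combination (β*(1-Y))*m1 - (β)*m2 + (β)*m3 - (β)*m4

/-- For `ε ∈ (0,1)`, `γ ∈ (1/2,1)`, `β > 0`, the two-bump test function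
`g_e` (with `c_r = 1`, `c_ℓ = β/(γ+β)`, `ℓ = false`, `r = true`) satisfies
`A g_e ≥ (√(β(γ+β))/(2γ−1)) ε^{1/2−γ} (1 − ε^{γ−1/2}) g_e` pointwise on
`[log ε, 0] × {ℓ, r}`, where `A` is the integral operator of the idealized branching
process with `a_ℓ = β`, `a_r = γ + β`. -/
theorem IBP_operator_test_function_lower_bound (ε γ β : ℝ) (hε : ε ∈ Set.Ioo (0 : ℝ) 1)
    (hγ : γ ∈ Set.Ioo (1 / 2 : ℝ) 1) (hβ : 0 < β)
    (ge : ℝ → Bool → ℝ)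
    (hge : ∀ (s : ℝ) (α : Bool), ge s α =
      if s ≤ Real.log ε / 2 then
        (if α then (1 : ℝ) else β / (γ + β)) * ε ^ γ * Real.exp (-γ * s)
      else Real.sqrt (β / (γ + β)) * Real.sqrt ε * Real.exp (-(1 - γ) * s)) :
    ∀ s ∈ Set.Icc (Real.log ε) (0 : ℝ), ∀ α : Bool,
      Real.sqrt (β * (γ + β)) / (2 * γ - 1) * ε ^ ((1 : ℝ) / 2 - γ)
          * (1 - ε ^ (γ - 1 / 2)) * ge s α ≤
        (∫ t in (Real.log ε - s)..(0 : ℝ), ge (s + t) true * (β * Real.exp ((1 - γ) * t)))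
        + ∫ t in (0 : ℝ)..(-s),
            ge (s + t) false * ((if α then γ + β else β) * Real.exp (γ * t)) := by
  obtain ⟨hε0, hε1⟩ := hε
  obtain ⟨hγ1, hγ2⟩ := hγ
  have hq : 0 < γ + β := by linarith
  have h2γ : (0:ℝ) < 2 * γ - 1 := by linarith
  have h12γ : (1 - 2 * γ : ℝ) ≠ 0 := by intro h; nlinarith
  set L := Real.log ε with hLdef
  have hL : L < 0 := Real.log_neg hε0 hε1
  intro s hs α
  obtain ⟨hsL, hs0⟩ := hs
  set S := Real.sqrt (β * (γ + β)) with hSdef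
  have hS0 : 0 < S := Real.sqrt_pos.2 (by positivity)
  have hS2 : S ^ 2 = β * (γ + β) := Real.sq_sqrt (by positivity)
  have hBS : Real.sqrt (β / (γ + β)) = β / S := by
    rw [eq_div_iff hS0.ne', hSdef, ← Real.sqrt_mul (by positivity)]
    rw [show β / (γ + β) * (β * (γ + β)) = β ^ 2 by field_simp]
    exact Real.sqrt_sq hβ.le
  have hεγ : ε ^ γ = Real.exp (γ * L) := by
    rw [Real.rpow_def_of_pos hε0, mul_comm]
  have hεhalf : Real.sqrt ε = Real.exp (L / 2) := by
    rw [Real.sqrt_eq_rpow, Real.rpow_def_of_pos hε0]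
    ring_nf
    rw [hLdef]
  have hεA : ε ^ ((1:ℝ) / 2 - γ) = Real.exp ((1 / 2 - γ) * L) := by
    rw [Real.rpow_def_of_pos hε0, mul_comm]
  have hεB : ε ^ (γ - 1 / 2 : ℝ) = Real.exp ((γ - 1 / 2) * L) := by
    rw [Real.rpow_def_of_pos hε0, mul_comm]
  set aα : ℝ := if α then γ + β else β with haα
  set cif : ℝ := if α then (1:ℝ) else β / (γ + β) with hcif
  have haα0 : 0 < aα := by rw [haα]; split <;> linarith
  have hcif0 : 0 < cif := by
    rw [hcif]; split
    · norm_num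
    · exact div_pos hβ hq
  have hkey : aα * β = cif * (β * (γ + β)) := by
    rw [haα, hcif]; split <;> field_simp <;> ring
  by_cases hsM : s ≤ L / 2
  · -- bump region: s ≤ log ε / 2
    have e1 : ∀ t ∈ Set.uIcc (L - s) (0:ℝ),
        ge (s + t) true * (β * Real.exp ((1 - γ) * t))
          = (β * Real.exp (γ * L) * Real.exp (-γ * s)) * Real.exp ((1 - 2 * γ) * t) := by
      intro t ht
      rw [Set.uIcc_of_le (by linarith : L - s ≤ (0:ℝ))] at ht
      have ht2 : t ≤ 0 := ht.2
      rw [hge, if_pos (by linarith : s + t ≤ L / 2)]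
      simp only [reduceIte]
      rw [hεγ]
      have h := expMul (-γ * (s + t)) ((1 - γ) * t) (-γ * s + (1 - 2 * γ) * t) (by ring)
      have h2 := expMul (-γ * s) ((1 - 2 * γ) * t) (-γ * s + (1 - 2 * γ) * t) (by ring)
      linear_combination (β * Real.exp (γ * L)) * h - (β * Real.exp (γ * L)) * h2
    have hI1 : (∫ t in (L - s)..(0:ℝ), ge (s + t) true * (β * Real.exp ((1 - γ) * t)))
        = (β * Real.exp (γ * L) * Real.exp (-γ * s)) *
            ((Real.exp ((1 - 2 * γ) * 0) - Real.exp ((1 - 2 * γ) * (L - s))) / (1 - 2 * γ)) := by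
      rw [intervalIntegral.integral_congr e1, intervalIntegral.integral_const_mul,
        expInt _ _ _ h12γ]
    have e2a : ∀ t ∈ Set.uIcc (0:ℝ) (L / 2 - s),
        ge (s + t) false * (aα * Real.exp (γ * t))
          = aα * (β / (γ + β)) * Real.exp (γ * L) * Real.exp (-γ * s) := by
      intro t ht
      rw [Set.uIcc_of_le (by linarith : (0:ℝ) ≤ L / 2 - s)] at ht
      rw [hge, if_pos (by linarith [ht.2] : s + t ≤ L / 2)]
      simp only [Bool.false_eq_true, if_false]
      rw [hεγ]
      have h := expMul (-γ * (s + t)) (γ * t) (-γ * s) (by ring)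
      linear_combination (aα * (β / (γ + β)) * Real.exp (γ * L)) * h
    have e2b : ∀ t ∈ Set.uIoc (L / 2 - s) (-s),
        ge (s + t) false * (aα * Real.exp (γ * t))
          = (aα * (β / S) * Real.exp (L / 2) * Real.exp (-(1 - γ) * s)) *
              Real.exp ((2 * γ - 1) * t) := by
      intro t ht
      rw [Set.uIoc_of_le (by linarith : L / 2 - s ≤ -s)] at ht
      rw [hge, if_neg (by push_neg; linarith [ht.1] : ¬ (s + t ≤ L / 2))]
      rw [hBS, hεhalf]
      have h := expMul (-(1 - γ) * (s + t)) (γ * t) (-(1 - γ) * s + (2 * γ - 1) * t) (by ring)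
      have h2 := expMul (-(1 - γ) * s) ((2 * γ - 1) * t) (-(1 - γ) * s + (2 * γ - 1) * t) (by ring)
      linear_combination (β / S * Real.exp (L / 2) * aα) * h
        - (β / S * Real.exp (L / 2) * aα) * h2
    have int2a : IntervalIntegrable (fun t => ge (s + t) false * (aα * Real.exp (γ * t)))
        volume 0 (L / 2 - s) := by
      rw [intervalIntegrable_iff]
      refine IntegrableOn.congr_fun
        (f := fun _ => aα * (β / (γ + β)) * Real.exp (γ * L) * Real.exp (-γ * s))
        (integrableOn_const measure_Ioc_lt_top.ne) ?_ measurableSet_uIoc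
      intro t ht
      exact (e2a t (Set.uIoc_subset_uIcc ht)).symm
    have int2b : IntervalIntegrable (fun t => ge (s + t) false * (aα * Real.exp (γ * t)))
        volume (L / 2 - s) (-s) := by
      rw [intervalIntegrable_iff]
      have hc : Continuous fun t : ℝ =>
          (aα * (β / S) * Real.exp (L / 2) * Real.exp (-(1 - γ) * s)) *
            Real.exp ((2 * γ - 1) * t) :=
        continuous_const.mul (Real.continuous_exp.comp (continuous_const.mul continuous_id))
      have := hc.intervalIntegrable (μ := volume) (L / 2 - s) (-s)
      rw [intervalIntegrable_iff] at this
      exact this.congr_fun (fun t ht => (e2b t ht).symm) measurableSet_uIoc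
    have hsplit : (∫ t in (0:ℝ)..(-s), ge (s + t) false * (aα * Real.exp (γ * t)))
        = (∫ t in (0:ℝ)..(L / 2 - s), ge (s + t) false * (aα * Real.exp (γ * t)))
          + ∫ t in (L / 2 - s)..(-s), ge (s + t) false * (aα * Real.exp (γ * t)) :=
      (intervalIntegral.integral_add_adjacent_intervals int2a int2b).symm
    have hI2a : (∫ t in (0:ℝ)..(L / 2 - s), ge (s + t) false * (aα * Real.exp (γ * t)))
        = (L / 2 - s - 0) • (aα * (β / (γ + β)) * Real.exp (γ * L) * Real.exp (-γ * s)) := by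
      rw [intervalIntegral.integral_congr e2a, intervalIntegral.integral_const]
    have hI2b : (∫ t in (L / 2 - s)..(-s), ge (s + t) false * (aα * Real.exp (γ * t)))
        = (aα * (β / S) * Real.exp (L / 2) * Real.exp (-(1 - γ) * s)) *
            ((Real.exp ((2 * γ - 1) * (-s)) - Real.exp ((2 * γ - 1) * (L / 2 - s)))
              / (2 * γ - 1)) := by
      rw [intervalIntegral.integral_congr_ae (MeasureTheory.ae_of_all _ e2b),
        intervalIntegral.integral_const_mul, expInt _ _ _ (ne_of_gt h2γ)]
    have m1 := expMul3 ((1 / 2 - γ) * L) (γ * L) (-γ * s) (L / 2 - γ * s) (by ring)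
    have m2 := expMul ((γ - 1 / 2) * L) (L / 2 - γ * s) (γ * L - γ * s) (by ring)
    have m3 := expMul3 (L / 2) (-(1 - γ) * s) ((2 * γ - 1) * (-s)) (L / 2 - γ * s) (by ring)
    have m4 := expMul3 (L / 2) (-(1 - γ) * s) ((2 * γ - 1) * (L / 2 - s)) (γ * L - γ * s)
      (by ring)
    have hTeq := aux1 (2 * γ - 1) S cif aα β (γ + β)
      (Real.exp ((1 / 2 - γ) * L)) (Real.exp ((γ - 1 / 2) * L))
      (Real.exp (γ * L)) (Real.exp (-γ * s))
      (Real.exp (L / 2)) (Real.exp (-(1 - γ) * s))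
      (Real.exp ((2 * γ - 1) * (-s))) (Real.exp ((2 * γ - 1) * (L / 2 - s)))
      (Real.exp (L / 2 - γ * s)) (Real.exp (γ * L - γ * s))
      (ne_of_gt h2γ) hS0.ne' hS2 hkey m1 m2 m3 m4
    have hApos : 0 ≤ (β * Real.exp (γ * L) * Real.exp (-γ * s)) *
        ((Real.exp ((1 - 2 * γ) * 0) - Real.exp ((1 - 2 * γ) * (L - s))) / (1 - 2 * γ)) := by
      have hle : Real.exp ((1 - 2 * γ) * 0) ≤ Real.exp ((1 - 2 * γ) * (L - s)) := by
        apply Real.exp_le_exp.2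
        have h := mul_nonneg_of_nonpos_of_nonpos
          (show (1 - 2 * γ : ℝ) ≤ 0 by linarith) (show L - s ≤ 0 by linarith)
        simpa using h
      refine mul_nonneg (by positivity) (div_nonneg_iff.2 (Or.inr ⟨by linarith, by linarith⟩))
    have hBpos : 0 ≤ (L / 2 - s - 0) •
        (aα * (β / (γ + β)) * Real.exp (γ * L) * Real.exp (-γ * s)) := by
      rw [smul_eq_mul]
      refine mul_nonneg (by linarith) ?_
      refine mul_nonneg (mul_nonneg (mul_nonneg haα0.le (by positivity)) (Real.exp_pos _).le)
        (Real.exp_pos _).le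
    rw [hI1, hsplit, hI2a, hI2b, hge s α, if_pos hsM, ← hcif, hεγ, hεA, hεB]
    linarith only [hTeq, hApos, hBpos]
  · -- flat region: s > log ε / 2
    push_neg at hsM
    have e1a : ∀ t ∈ Set.uIcc (L - s) (L / 2 - s),
        ge (s + t) true * (β * Real.exp ((1 - γ) * t))
          = (β * Real.exp (γ * L) * Real.exp (-γ * s)) * Real.exp ((1 - 2 * γ) * t) := by
      intro t ht
      rw [Set.uIcc_of_le (by linarith : L - s ≤ L / 2 - s)] at ht
      rw [hge, if_pos (by linarith [ht.2] : s + t ≤ L / 2)]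
      simp only [reduceIte]
      rw [hεγ]
      have h := expMul (-γ * (s + t)) ((1 - γ) * t) (-γ * s + (1 - 2 * γ) * t) (by ring)
      have h2 := expMul (-γ * s) ((1 - 2 * γ) * t) (-γ * s + (1 - 2 * γ) * t) (by ring)
      linear_combination (β * Real.exp (γ * L)) * h - (β * Real.exp (γ * L)) * h2
    have e1b : ∀ t ∈ Set.uIoc (L / 2 - s) (0:ℝ),
        ge (s + t) true * (β * Real.exp ((1 - γ) * t))
          = β * (β / S) * Real.exp (L / 2) * Real.exp (-(1 - γ) * s) := by
      intro t ht
      rw [Set.uIoc_of_le (by linarith : L / 2 - s ≤ (0:ℝ))] at ht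
      rw [hge, if_neg (by push_neg; linarith [ht.1] : ¬ (s + t ≤ L / 2))]
      rw [hBS, hεhalf]
      have h := expMul (-(1 - γ) * (s + t)) ((1 - γ) * t) (-(1 - γ) * s) (by ring)
      linear_combination (β / S * Real.exp (L / 2) * β) * h
    have int1a : IntervalIntegrable (fun t => ge (s + t) true * (β * Real.exp ((1 - γ) * t)))
        volume (L - s) (L / 2 - s) := by
      rw [intervalIntegrable_iff]
      have hc : Continuous fun t : ℝ =>
          (β * Real.exp (γ * L) * Real.exp (-γ * s)) * Real.exp ((1 - 2 * γ) * t) :=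
        continuous_const.mul (Real.continuous_exp.comp (continuous_const.mul continuous_id))
      have := hc.intervalIntegrable (μ := volume) (L - s) (L / 2 - s)
      rw [intervalIntegrable_iff] at this
      exact this.congr_fun (fun t ht => (e1a t (Set.uIoc_subset_uIcc ht)).symm)
        measurableSet_uIoc
    have int1b : IntervalIntegrable (fun t => ge (s + t) true * (β * Real.exp ((1 - γ) * t)))
        volume (L / 2 - s) 0 := by
      rw [intervalIntegrable_iff]
      refine IntegrableOn.congr_fun
        (f := fun _ => β * (β / S) * Real.exp (L / 2) * Real.exp (-(1 - γ) * s))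
        (integrableOn_const measure_Ioc_lt_top.ne) ?_ measurableSet_uIoc
      intro t ht
      exact (e1b t ht).symm
    have hsplit : (∫ t in (L - s)..(0:ℝ), ge (s + t) true * (β * Real.exp ((1 - γ) * t)))
        = (∫ t in (L - s)..(L / 2 - s), ge (s + t) true * (β * Real.exp ((1 - γ) * t)))
          + ∫ t in (L / 2 - s)..(0:ℝ), ge (s + t) true * (β * Real.exp ((1 - γ) * t)) :=
      (intervalIntegral.integral_add_adjacent_intervals int1a int1b).symm
    have hI1a : (∫ t in (L - s)..(L / 2 - s), ge (s + t) true * (β * Real.exp ((1 - γ) * t)))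
        = (β * Real.exp (γ * L) * Real.exp (-γ * s)) *
            ((Real.exp ((1 - 2 * γ) * (L / 2 - s)) - Real.exp ((1 - 2 * γ) * (L - s)))
              / (1 - 2 * γ)) := by
      rw [intervalIntegral.integral_congr e1a, intervalIntegral.integral_const_mul,
        expInt _ _ _ h12γ]
    have hI1b : (∫ t in (L / 2 - s)..(0:ℝ), ge (s + t) true * (β * Real.exp ((1 - γ) * t)))
        = (0 - (L / 2 - s)) • (β * (β / S) * Real.exp (L / 2) * Real.exp (-(1 - γ) * s)) := by
      rw [intervalIntegral.integral_congr_ae (MeasureTheory.ae_of_all _ e1b),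
        intervalIntegral.integral_const]
    have e2 : ∀ t ∈ Set.uIcc (0:ℝ) (-s),
        ge (s + t) false * (aα * Real.exp (γ * t))
          = (aα * (β / S) * Real.exp (L / 2) * Real.exp (-(1 - γ) * s)) *
              Real.exp ((2 * γ - 1) * t) := by
      intro t ht
      rw [Set.uIcc_of_le (by linarith : (0:ℝ) ≤ -s)] at ht
      rw [hge, if_neg (by push_neg; linarith [ht.1] : ¬ (s + t ≤ L / 2))]
      rw [hBS, hεhalf]
      have h := expMul (-(1 - γ) * (s + t)) (γ * t) (-(1 - γ) * s + (2 * γ - 1) * t) (by ring)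
      have h2 := expMul (-(1 - γ) * s) ((2 * γ - 1) * t) (-(1 - γ) * s + (2 * γ - 1) * t) (by ring)
      linear_combination (β / S * Real.exp (L / 2) * aα) * h
        - (β / S * Real.exp (L / 2) * aα) * h2
    have hI2 : (∫ t in (0:ℝ)..(-s), ge (s + t) false * (aα * Real.exp (γ * t)))
        = (aα * (β / S) * Real.exp (L / 2) * Real.exp (-(1 - γ) * s)) *
            ((Real.exp ((2 * γ - 1) * (-s)) - Real.exp ((2 * γ - 1) * 0)) / (2 * γ - 1)) := by
      rw [intervalIntegral.integral_congr e2, intervalIntegral.integral_const_mul,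
        expInt _ _ _ (ne_of_gt h2γ)]
    have m1 := expMul3 ((1 / 2 - γ) * L) (L / 2) (-(1 - γ) * s) ((1 - γ) * L - (1 - γ) * s)
      (by ring)
    have m2 := expMul ((γ - 1 / 2) * L) ((1 - γ) * L - (1 - γ) * s) (L / 2 - (1 - γ) * s)
      (by ring)
    have m3 := expMul3 (γ * L) (-γ * s) ((1 - 2 * γ) * (L / 2 - s)) (L / 2 - (1 - γ) * s)
      (by ring)
    have m4 := expMul3 (γ * L) (-γ * s) ((1 - 2 * γ) * (L - s)) ((1 - γ) * L - (1 - γ) * s)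
      (by ring)
    have hTeq := aux2 (2 * γ - 1) (1 - 2 * γ) S β
      (Real.exp ((1 / 2 - γ) * L)) (Real.exp ((γ - 1 / 2) * L))
      (Real.exp (γ * L)) (Real.exp (-γ * s))
      (Real.exp (L / 2)) (Real.exp (-(1 - γ) * s))
      (Real.exp ((1 - 2 * γ) * (L / 2 - s))) (Real.exp ((1 - 2 * γ) * (L - s)))
      (Real.exp ((1 - γ) * L - (1 - γ) * s)) (Real.exp (L / 2 - (1 - γ) * s))
      (ne_of_gt h2γ) hS0.ne' (by ring) m1 m2 m3 m4
    have hBpos : 0 ≤ (0 - (L / 2 - s)) •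
        (β * (β / S) * Real.exp (L / 2) * Real.exp (-(1 - γ) * s)) := by
      rw [smul_eq_mul]
      refine mul_nonneg (by linarith) (by positivity)
    have hCpos : 0 ≤ (aα * (β / S) * Real.exp (L / 2) * Real.exp (-(1 - γ) * s)) *
        ((Real.exp ((2 * γ - 1) * (-s)) - Real.exp ((2 * γ - 1) * 0)) / (2 * γ - 1)) := by
      have hle : Real.exp ((2 * γ - 1) * 0) ≤ Real.exp ((2 * γ - 1) * (-s)) := by
        apply Real.exp_le_exp.2
        have h := mul_nonneg (show (0:ℝ) ≤ 2 * γ - 1 by linarith) (show (0:ℝ) ≤ -s by linarith)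
        simpa using h
      refine mul_nonneg ?_ (div_nonneg (by linarith) (by linarith))
      refine mul_nonneg (mul_nonneg (mul_nonneg haα0.le (by positivity)) (Real.exp_pos _).le)
        (Real.exp_pos _).le
    rw [hsplit, hI1a, hI1b, hI2, hge s α, if_neg (by push_neg; linarith : ¬ (s ≤ L / 2)),
      hBS, hεhalf, hεA, hεB]
    linarith only [hTeq, hBpos, hCpos]
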